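/- For integers n ≥ 1, u ≥ 1 and r₀ ≥ 0 with 2u + r₀ ≤ n, the number of Motzkin paths of size n having exactly u up steps and exactly r₀ horizontal steps at level 0 equals ((r₀+1)/(n+1))·binom(n+1,u)·binom(n−r₀−u−1,u−1). -/

import Mathlib

/-- A Motzkin path: a sequence of up steps (+1), down steps (-1) and horizontal steps (0)
such that every prefix sum is nonnegative and the total sum is 0. -/
def IsMotzkinPath (l : List ℤ) : Prop :=
  (∀ x ∈ l, x = 1 ∨ x = -1 ∨ x = 0) ∧ (∀ k : ℕ, 0 ≤ (l.take k).sum) ∧ l.sum = 0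

/-- The number of horizontal steps at level 0: steps equal to 0 such that the sum of the
preceding steps is 0. -/
noncomputable def hZeroSteps (l : List ℤ) : ℕ :=
  {i : ℕ | i < l.length ∧ l.getD i 1 = 0 ∧ (l.take i).sum = 0}.ncard


namespace Stmt7

/-- valid step lists with nonneg prefixes -/
def Ok (l : List ℤ) : Prop := (∀ x ∈ l, x = 1 ∨ x = -1 ∨ x = 0) ∧ (∀ k : ℕ, 0 ≤ (l.take k).sum)

def A (n a b r : ℕ) : Set (List ℤ) :=
  {l | l.length = n ∧ Ok l ∧ l.count 1 = a ∧ l.count (-1) = b ∧ hZeroSteps l = r}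

lemma sum_eq_counts (l : List ℤ) (h : ∀ x ∈ l, x = 1 ∨ x = -1 ∨ x = 0) :
    l.sum = (l.count 1 : ℤ) - (l.count (-1) : ℤ) := by
  induction l with
  | nil => simp
  | cons y t ih =>
    have hy := h y (by simp)
    have ht := ih (fun x hx => h x (by simp [hx]))
    rcases hy with rfl | rfl | rfl <;>
      simp [List.count_cons, ht] <;> push_cast <;> ring

lemma hZero_card (l : List ℤ) :
    hZeroSteps l = ((Finset.range l.length).filter
      (fun i => l.getD i 1 = 0 ∧ (l.take i).sum = 0)).card := by
  rw [hZeroSteps, ← Set.ncard_coe_finset]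
  congr 1
  ext i
  simp [Finset.mem_filter, and_assoc]

lemma hZero_append (l : List ℤ) (x : ℤ) :
    hZeroSteps (l ++ [x]) = hZeroSteps l + (if x = 0 ∧ l.sum = 0 then 1 else 0) := by
  rw [hZero_card, hZero_card]
  have hlen : (l ++ [x]).length = l.length + 1 := by simp
  rw [hlen, Finset.range_add_one, Finset.filter_insert]
  have hgetD : ∀ i < l.length, (l ++ [x]).getD i 1 = l.getD i 1 := by
    intro i hi
    rw [List.getD_eq_getElem?_getD, List.getD_eq_getElem?_getD, List.getElem?_append_left hi]
  have htake : ∀ i ≤ l.length, (l ++ [x]).take i = l.take i := by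
    intro i hi
    exact List.take_append_of_le_length hi
  have hfilter : (Finset.range l.length).filter
      (fun i => (l ++ [x]).getD i 1 = 0 ∧ ((l ++ [x]).take i).sum = 0) =
      (Finset.range l.length).filter (fun i => l.getD i 1 = 0 ∧ (l.take i).sum = 0) := by
    apply Finset.filter_congr
    intro i hi
    rw [Finset.mem_range] at hi
    rw [hgetD i hi, htake i hi.le]
  have hgl : (l ++ [x]).getD l.length 1 = x := by
    rw [List.getD_eq_getElem?_getD, List.getElem?_append_right le_rfl]
    simp
  have htl : ((l ++ [x]).take l.length).sum = l.sum := by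
    rw [htake l.length le_rfl, List.take_length]
  by_cases hc : x = 0 ∧ l.sum = 0
  · rw [if_pos hc, if_pos (by rw [hgl, htl]; exact hc), hfilter,
      Finset.card_insert_of_notMem (by simp)]
  · rw [if_neg hc, if_neg (by rw [hgl, htl]; exact hc), hfilter, add_zero]

end Stmt7

namespace Stmt7

lemma finite_ok (n : ℕ) : {l : List ℤ | l.length = n ∧ ∀ x ∈ l, x = 1 ∨ x = -1 ∨ x = 0}.Finite := by
  induction n with
  | zero =>
    apply Set.Finite.subset (Set.finite_singleton ([] : List ℤ))
    rintro l ⟨hl, -⟩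
    simp [List.length_eq_zero_iff.mp hl]
  | succ n ih =>
    have : {l : List ℤ | l.length = n + 1 ∧ ∀ x ∈ l, x = 1 ∨ x = -1 ∨ x = 0} ⊆
        (fun t => (1 : ℤ) :: t) '' {l | l.length = n ∧ ∀ x ∈ l, x = 1 ∨ x = -1 ∨ x = 0} ∪
        ((fun t => (-1 : ℤ) :: t) '' {l | l.length = n ∧ ∀ x ∈ l, x = 1 ∨ x = -1 ∨ x = 0} ∪
         (fun t => (0 : ℤ) :: t) '' {l | l.length = n ∧ ∀ x ∈ l, x = 1 ∨ x = -1 ∨ x = 0}) := by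
      rintro l ⟨hl, hmem⟩
      cases l with
      | nil => simp at hl
      | cons y t =>
        have hy := hmem y (by simp)
        have ht : t.length = n ∧ ∀ x ∈ t, x = 1 ∨ x = -1 ∨ x = 0 :=
          ⟨by simpa using hl, fun x hx => hmem x (by simp [hx])⟩
        rcases hy with rfl | rfl | rfl
        · exact Or.inl ⟨t, ht, rfl⟩
        · exact Or.inr (Or.inl ⟨t, ht, rfl⟩)
        · exact Or.inr (Or.inr ⟨t, ht, rfl⟩)
    exact Set.Finite.subset (((ih.image _).union ((ih.image _).union (ih.image _)))) this

lemma finite_A (n a b r : ℕ) : (A n a b r).Finite := by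
  apply Set.Finite.subset (finite_ok n)
  rintro l ⟨h1, h2, -⟩
  exact ⟨h1, h2.1⟩

lemma A_empty_of_lt (n a b r : ℕ) (h : a < b) : A n a b r = ∅ := by
  ext l
  simp only [A, Set.mem_setOf_eq, Set.mem_empty_iff_false, iff_false]
  rintro ⟨hlen, ⟨hmem, hpre⟩, hc1, hcm, hr⟩
  have := hpre l.length
  rw [List.take_length, sum_eq_counts l hmem, hc1, hcm] at this
  have : (b:ℤ) ≤ a := by linarith
  exact absurd h (by exact_mod_cast not_lt.mpr this)

lemma A_zero (n r : ℕ) : A n 0 0 r = if r = n then {List.replicate n (0:ℤ)} else ∅ := by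
  ext l
  simp only [A, Set.mem_setOf_eq]
  constructor
  · rintro ⟨hlen, ⟨hmem, hpre⟩, hc1, hcm, hr⟩
    have hall : ∀ x ∈ l, x = 0 := by
      intro x hx
      rcases hmem x hx with rfl | rfl | rfl
      · exact absurd (List.count_pos_iff.mpr hx) (by omega)
      · exact absurd (List.count_pos_iff.mpr hx) (by omega)
      · rfl
    have hrep : l = List.replicate n (0:ℤ) := by
      rw [← hlen]
      exact List.eq_replicate_of_mem hall
    have hsum : ∀ i, (l.take i).sum = 0 := by
      intro i
      have : ∀ x ∈ l.take i, x = (0:ℤ) := fun x hx => hall x (List.mem_of_mem_take hx)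
      rw [List.eq_replicate_of_mem this]
      simp
    have hrn : r = n := by
      rw [← hr, ← hlen, hZero_card]
      rw [Finset.filter_true_of_mem, Finset.card_range]
      intro i hi
      rw [Finset.mem_range] at hi
      refine ⟨?_, hsum i⟩
      rw [List.getD_eq_getElem l 1 hi]
      exact hall _ (List.getElem_mem _)
    rw [if_pos hrn]
    exact hrep
  · intro hl
    by_cases hrn : r = n
    · rw [if_pos hrn] at hl
      subst hl
      refine ⟨by simp, ⟨?_, ?_⟩, ?_, ?_, ?_⟩
      · intro x hx; right; right; exact List.eq_of_mem_replicate hx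
      · intro k
        have : (List.replicate n (0:ℤ)).take k = List.replicate (min k n) 0 := by
          simp [List.take_replicate]
        rw [this]; simp
      · simp [List.count_replicate]
      · simp [List.count_replicate]
      · rw [hZero_card]
        rw [Finset.filter_true_of_mem, Finset.card_range]
        · simp [hrn]
        · intro i hi
          rw [Finset.mem_range, List.length_replicate] at hi
          constructor
          · rw [List.getD_eq_getElem _ 1 (by simpa using hi)]
            simp
          · rw [List.take_replicate]; simp
    · rw [if_neg hrn] at hl
      exact absurd hl (Set.notMem_empty l)

end Stmt7

namespace Stmt7

lemma ok_append_iff (l : List ℤ) (x : ℤ) (hx : x = 1 ∨ x = -1 ∨ x = 0) :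
    Ok (l ++ [x]) ↔ Ok l ∧ 0 ≤ l.sum + x := by
  constructor
  · rintro ⟨hmem, hpre⟩
    refine ⟨⟨fun y hy => hmem y (by simp [hy]), fun k => ?_⟩, ?_⟩
    · by_cases hk : k ≤ l.length
      · have := hpre k
        rwa [List.take_append_of_le_length hk] at this
      · have := hpre l.length
        rw [List.take_append_of_le_length le_rfl, List.take_length] at this
        rw [List.take_of_length_le (by omega)]
        exact this
    · have := hpre (l.length + 1)
      rw [List.take_of_length_le (by simp)] at this
      simpa using this
  · rintro ⟨⟨hmem, hpre⟩, hsum⟩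
    refine ⟨fun y hy => ?_, fun k => ?_⟩
    · rcases List.mem_append.mp hy with h | h
      · exact hmem y h
      · simp at h; subst h; exact hx
    · by_cases hk : k ≤ l.length
      · rw [List.take_append_of_le_length hk]; exact hpre k
      · rw [List.take_of_length_le (by simp; omega)]
        simpa using hsum

lemma sum_of_mem_A {n a b r : ℕ} {l : List ℤ} (h : l ∈ A n a b r) :
    l.sum = (a : ℤ) - (b : ℤ) := by
  obtain ⟨-, ⟨hmem, -⟩, hc1, hcm, -⟩ := h
  rw [sum_eq_counts l hmem, hc1, hcm]

lemma le_of_mem_A {n a b r : ℕ} {l : List ℤ} (h : l ∈ A n a b r) : b ≤ a := by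
  have h1 := h.2.1.2 l.length
  rw [List.take_length, sum_of_mem_A h] at h1
  exact_mod_cast sub_nonneg.mp h1

lemma append_one_mem_iff (l : List ℤ) (n a b r : ℕ) :
    l ++ [(1:ℤ)] ∈ A (n+1) (a+1) b r ↔ l ∈ A n a b r := by
  simp only [A, Set.mem_setOf_eq, List.length_append, List.length_singleton,
    List.count_append, hZero_append]
  rw [ok_append_iff l 1 (by tauto)]
  constructor
  · rintro ⟨hlen, ⟨hok, -⟩, hc1, hcm, hr⟩
    refine ⟨by omega, hok, by simpa using hc1, by simpa using hcm, by simpa using hr⟩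
  · rintro ⟨hlen, hok, hc1, hcm, hr⟩
    have hsum : l.sum = (a:ℤ) - b := by
      rw [sum_eq_counts l hok.1, hc1, hcm]
    have hba : b ≤ a := by
      have h1 := hok.2 l.length
      rw [List.take_length, hsum] at h1
      exact_mod_cast sub_nonneg.mp h1
    refine ⟨by omega, ⟨hok, by rw [hsum]; push_cast; omega⟩,
      by simpa using hc1, by simpa using hcm, by simp [hr]⟩

lemma append_negone_mem_iff (l : List ℤ) (n a b r : ℕ) (hba : b + 1 ≤ a) :
    l ++ [(-1:ℤ)] ∈ A (n+1) a (b+1) r ↔ l ∈ A n a b r := by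
  simp only [A, Set.mem_setOf_eq, List.length_append, List.length_singleton,
    List.count_append, hZero_append]
  rw [ok_append_iff l (-1) (by tauto)]
  constructor
  · rintro ⟨hlen, ⟨hok, -⟩, hc1, hcm, hr⟩
    refine ⟨by omega, hok, by simpa using hc1, by simpa using hcm, by simpa using hr⟩
  · rintro ⟨hlen, hok, hc1, hcm, hr⟩
    have hsum : l.sum = (a:ℤ) - b := by
      rw [sum_eq_counts l hok.1, hc1, hcm]
    refine ⟨by omega, ⟨hok, by rw [hsum]; push_cast; omega⟩,
      by simpa using hc1, by simpa using hcm, by simp [hr]⟩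

lemma append_zero_mem_iff_ne (l : List ℤ) (n a b r : ℕ) (hne : a ≠ b) :
    l ++ [(0:ℤ)] ∈ A (n+1) a b r ↔ l ∈ A n a b r := by
  simp only [A, Set.mem_setOf_eq, List.length_append, List.length_singleton,
    List.count_append, hZero_append]
  rw [ok_append_iff l 0 (by tauto)]
  constructor
  · rintro ⟨hlen, ⟨hok, -⟩, hc1, hcm, hr⟩
    have hc1' : l.count 1 = a := by simpa using hc1
    have hcm' : l.count (-1) = b := by simpa using hcm
    have hsum : l.sum = (a:ℤ) - b := by
      rw [sum_eq_counts l hok.1, hc1', hcm']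
    have hsne : ¬ l.sum = 0 := by
      intro hs0
      rw [hsum] at hs0
      have : a = b := by exact_mod_cast sub_eq_zero.mp hs0
      exact hne this
    simp only [true_and] at hr
    rw [if_neg hsne] at hr
    exact ⟨by omega, hok, hc1', hcm', by omega⟩
  · rintro ⟨hlen, hok, hc1, hcm, hr⟩
    have hsum : l.sum = (a:ℤ) - b := by
      rw [sum_eq_counts l hok.1, hc1, hcm]
    have hba : b ≤ a := by
      have h1 := hok.2 l.length
      rw [List.take_length, hsum] at h1
      exact_mod_cast sub_nonneg.mp h1
    have hsne : ¬ l.sum = 0 := by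
      intro hs0
      rw [hsum] at hs0
      have : a = b := by exact_mod_cast sub_eq_zero.mp hs0
      exact hne this
    refine ⟨by omega, ⟨hok, by rw [hsum]; push_cast; omega⟩,
      by simpa using hc1, by simpa using hcm, ?_⟩
    simp only [true_and]
    rw [if_neg hsne]
    omega

lemma append_zero_mem_iff_eq (l : List ℤ) (n a r : ℕ) :
    l ++ [(0:ℤ)] ∈ A (n+1) a a (r+1) ↔ l ∈ A n a a r := by
  simp only [A, Set.mem_setOf_eq, List.length_append, List.length_singleton,
    List.count_append, hZero_append]
  rw [ok_append_iff l 0 (by tauto)]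
  constructor
  · rintro ⟨hlen, ⟨hok, -⟩, hc1, hcm, hr⟩
    have hc1' : l.count 1 = a := by simpa using hc1
    have hcm' : l.count (-1) = a := by simpa using hcm
    have hsum : l.sum = 0 := by
      rw [sum_eq_counts l hok.1, hc1', hcm']; ring
    simp only [true_and] at hr
    rw [if_pos hsum] at hr
    exact ⟨by omega, hok, hc1', hcm', by omega⟩
  · rintro ⟨hlen, hok, hc1, hcm, hr⟩
    have hsum : l.sum = 0 := by
      rw [sum_eq_counts l hok.1, hc1, hcm]; ring
    refine ⟨by omega, ⟨hok, by rw [hsum]; norm_num⟩,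
      by simpa using hc1, by simpa using hcm, ?_⟩
    simp only [true_and]
    rw [if_pos hsum]
    omega

end Stmt7

namespace Stmt7

lemma last_ne {t₁ t₂ : List ℤ} {x y : ℤ} (h : t₁ ++ [x] = t₂ ++ [y]) : x = y := by
  have h1 : (t₁ ++ [x]).getLast (by simp) = x := List.getLast_append _
  have h2 : (t₂ ++ [y]).getLast (by simp) = y := List.getLast_append _
  rw [← h1, ← h2]
  congr 1

lemma ncard_A_succ (n a b r : ℕ) (ha : 1 ≤ a) (hba : b ≤ a) :
    (A (n+1) a b r).ncard =
      (A n (a-1) b r).ncard +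
      (if b = 0 then 0 else (A n a (b-1) r).ncard) +
      (if a = b then (if r = 0 then 0 else (A n a a (r-1)).ncard) else (A n a b r).ncard) := by
  classical
  set DS : Set (List ℤ) := if b = 0 then ∅ else A n a (b-1) r with hDS
  set HS : Set (List ℤ) := (if a = b then (if r = 0 then ∅ else A n a a (r-1))
      else A n a b r) with hHS
  set U : Set (List ℤ) := (fun l => l ++ [(1:ℤ)]) '' A n (a-1) b r with hU
  set D : Set (List ℤ) := (fun l => l ++ [(-1:ℤ)]) '' DS with hD
  set H : Set (List ℤ) := (fun l => l ++ [(0:ℤ)]) '' HS with hH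
  have ha' : a - 1 + 1 = a := by omega
  have hdecomp : A (n+1) a b r = U ∪ D ∪ H := by
    ext l
    constructor
    · intro hl
      have hlen : l.length = n + 1 := hl.1
      have hne : l ≠ [] := by intro h; rw [h] at hlen; simp at hlen
      obtain ⟨t, x, hlx⟩ : ∃ t x, t ++ [x] = l :=
        ⟨l.dropLast, l.getLast hne, List.dropLast_append_getLast hne⟩
      have hxmem : x ∈ l := by rw [← hlx]; simp
      rcases hl.2.1.1 x hxmem with rfl | rfl | rfl
      · left; left
        refine ⟨t, ?_, hlx⟩
        rw [← append_one_mem_iff t n (a-1) b r, ha', hlx]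
        exact hl
      · left; right
        have hbpos : 1 ≤ b := by
          have hcb : l.count (-1) = b := hl.2.2.2.1
          have hc : 0 < l.count (-1) := List.count_pos_iff.mpr hxmem
          omega
        refine ⟨t, ?_, hlx⟩
        rw [hDS, if_neg (by omega)]
        have hb' : b - 1 + 1 = b := by omega
        rw [← append_negone_mem_iff t n a (b-1) r (by omega), hb', hlx]
        exact hl
      · right
        refine ⟨t, ?_, hlx⟩
        rw [hHS]
        by_cases hab : a = b
        · subst hab
          have hsl : l.sum = 0 := by
            rw [sum_eq_counts l hl.2.1.1, hl.2.2.1, hl.2.2.2.1]; ring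
          have hst : t.sum = 0 := by
            have h2 : l.sum = t.sum := by rw [← hlx]; simp
            rw [h2] at hsl; exact hsl
          have hrz : hZeroSteps l = hZeroSteps t + 1 := by
            rw [← hlx, hZero_append, if_pos ⟨rfl, hst⟩]
          have hrpos : 1 ≤ r := by
            have := hl.2.2.2.2
            omega
          rw [if_pos rfl, if_neg (by omega)]
          have hr' : r - 1 + 1 = r := by omega
          rw [← append_zero_mem_iff_eq t n a (r-1), hr', hlx]
          exact hl
        · rw [if_neg hab]
          rw [← append_zero_mem_iff_ne t n a b r hab, hlx]
          exact hl
    · intro hl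
      rcases hl with (hl | hl) | hl
      · obtain ⟨t, htmem, rfl⟩ := hl
        rw [← ha'] at htmem ⊢
        exact (append_one_mem_iff t n (a-1) b r).mpr htmem
      · obtain ⟨t, htmem, rfl⟩ := hl
        rw [hDS] at htmem
        by_cases hb : b = 0
        · rw [if_pos hb] at htmem; exact absurd htmem (Set.notMem_empty _)
        · rw [if_neg hb] at htmem
          have hb' : b - 1 + 1 = b := by omega
          rw [← hb'] at htmem ⊢
          exact (append_negone_mem_iff t n a (b-1) r (by omega)).mpr htmem
      · obtain ⟨t, htmem, rfl⟩ := hl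
        rw [hHS] at htmem
        by_cases hab : a = b
        · subst hab
          rw [if_pos rfl] at htmem
          by_cases hr : r = 0
          · rw [if_pos hr] at htmem; exact absurd htmem (Set.notMem_empty _)
          · rw [if_neg hr] at htmem
            have hr' : r - 1 + 1 = r := by omega
            rw [← hr'] at htmem ⊢
            exact (append_zero_mem_iff_eq t n a (r-1)).mpr htmem
        · rw [if_neg hab] at htmem
          exact (append_zero_mem_iff_ne t n a b r hab).mpr htmem
  have hfinDS : DS.Finite := by
    rw [hDS]; split
    · exact Set.finite_empty
    · exact finite_A n a (b-1) r
  have hfinHS : HS.Finite := by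
    rw [hHS]; split
    · split
      · exact Set.finite_empty
      · exact finite_A n a a (r-1)
    · exact finite_A n a b r
  have hinj : ∀ x : ℤ, Function.Injective (fun l : List ℤ => l ++ [x]) := by
    intro x l₁ l₂ h
    simpa using h
  have hdisj1 : Disjoint U D := by
    rw [Set.disjoint_left]
    rintro l ⟨t₁, -, h1⟩ ⟨t₂, -, h2⟩
    have : (1:ℤ) = -1 := last_ne (h1.trans h2.symm)
    norm_num at this
  have hdisj2 : Disjoint (U ∪ D) H := by
    rw [Set.disjoint_left]
    rintro l (⟨t₁, -, h1⟩ | ⟨t₁, -, h1⟩) ⟨t₂, -, h2⟩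
    · have : (1:ℤ) = 0 := last_ne (h1.trans h2.symm)
      norm_num at this
    · have : (-1:ℤ) = 0 := last_ne (h1.trans h2.symm)
      norm_num at this
  rw [hdecomp, Set.ncard_union_eq hdisj2 (((finite_A n (a-1) b r).image _).union (hfinDS.image _))
      (hfinHS.image _),
    Set.ncard_union_eq hdisj1 ((finite_A n (a-1) b r).image _) (hfinDS.image _),
    Set.ncard_image_of_injective _ (hinj 1), Set.ncard_image_of_injective _ (hinj (-1)),
    Set.ncard_image_of_injective _ (hinj 0)]
  congr 1
  · congr 1
    rw [hDS]
    split
    · simp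
    · rfl
  · rw [hHS]
    by_cases hab : a = b
    · rw [if_pos hab, if_pos hab]
      by_cases hr : r = 0
      · rw [if_pos hr, if_pos hr]; simp
      · rw [if_neg hr, if_neg hr]
    · rw [if_neg hab, if_neg hab]

end Stmt7


namespace Stmt7

/-- ballot-type coefficient -/
noncomputable def eh (a b q : ℕ) : ℝ :=
  (Nat.choose (a+b-q-1) (a-1) : ℝ) - (Nat.choose (a+b-q-1) a : ℝ)

/-- candidate counting formula -/
noncomputable def S (n a b r : ℕ) : ℝ :=
  if a + b + r ≤ n then
    ∑ q ∈ Finset.range (b+1),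
      eh a b q * (Nat.choose (r+q) q : ℝ) * (Nat.choose (n-r-q-1) (a+b-q-1) : ℝ)
  else 0


lemma pascal_helper {M S m : ℕ} (h1 : M = m + 1) (h2 : 1 ≤ S) :
    M.choose S = m.choose (S-1) + m.choose S := by
  subst h1
  obtain ⟨s, rfl⟩ : ∃ s, S = s + 1 := ⟨S - 1, by omega⟩
  simpa using Nat.choose_succ_succ m s

lemma eh_diag_zero (a : ℕ) (ha : 1 ≤ a) : eh a a 0 = 0 := by
  rw [eh]
  have h := Nat.choose_symm (show a ≤ a+a-0-1 by omega)
  have e : a+a-0-1-a = a-1 := by omega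
  rw [e] at h
  rw [h]; ring

lemma eh_swap (a q : ℕ) : eh a a (q+1) = eh a (a-1) q := by
  have e : a+a-(q+1)-1 = a+(a-1)-q-1 := by omega
  rw [eh, eh, e]

lemma eh_pascal (a b q : ℕ) (ha : 2 ≤ a) (hb : 1 ≤ b) (hq : q ≤ b) :
    eh a b q = eh (a-1) b q + eh a (b-1) q := by
  have e1 : (a-1)+b-q-1 = a+b-q-2 := by omega
  have e2 : a-1-1 = a-2 := by omega
  have e3 : a+(b-1)-q-1 = a+b-q-2 := by omega
  have h1 : (a+b-q-1).choose (a-1) = (a+b-q-2).choose (a-2) + (a+b-q-2).choose (a-1) := by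
    have := pascal_helper (show a+b-q-1 = (a+b-q-2)+1 by omega) (show 1 ≤ a-1 by omega)
    rwa [show a-1-1 = a-2 by omega] at this
  have h2 : (a+b-q-1).choose a = (a+b-q-2).choose (a-1) + (a+b-q-2).choose a := by
    have := pascal_helper (show a+b-q-1 = (a+b-q-2)+1 by omega) (show 1 ≤ a by omega)
    rwa [show a-1 = a-1 from rfl] at this
  rw [eh, eh, eh, e1, e2, e3, h1, h2]
  push_cast
  ring

lemma eh_oob (a b : ℕ) (ha : 1 ≤ a) (hb : 1 ≤ b) (hab : b + 1 ≤ a) : eh a (b-1) b = 0 := by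
  rw [eh]
  have z1 : (a+(b-1)-b-1).choose (a-1) = 0 := Nat.choose_eq_zero_of_lt (by omega)
  have z2 : (a+(b-1)-b-1).choose a = 0 := Nat.choose_eq_zero_of_lt (by omega)
  rw [z1, z2]; ring

/-- recurrence, case a > b ≥ 1 -/
lemma S_rec_gt (n a b r : ℕ) (ha : 2 ≤ a) (hb : 1 ≤ b) (hba : b < a) :
    S (n+1) a b r = S n (a-1) b r + S n a (b-1) r + S n a b r := by
  by_cases hg : a + b + r ≤ n + 1
  · have hg1 : (a-1) + b + r ≤ n := by omega
    have hg2 : a + (b-1) + r ≤ n := by omega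
    rw [S, if_pos hg, S, if_pos hg1, S, if_pos hg2, S]
    have hstep : ∀ q ∈ Finset.range (b+1),
        eh a b q * ((r+q).choose q : ℝ) * ((n+1-r-q-1).choose (a+b-q-1) : ℝ)
        = (eh (a-1) b q * ((r+q).choose q : ℝ) * ((n-r-q-1).choose ((a-1)+b-q-1) : ℝ)
          + eh a (b-1) q * ((r+q).choose q : ℝ) * ((n-r-q-1).choose (a+(b-1)-q-1) : ℝ))
          + eh a b q * ((r+q).choose q : ℝ) * ((n-r-q-1).choose (a+b-q-1) : ℝ) := by
      intro q hq
      rw [Finset.mem_range] at hq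
      have hpas : (n+1-r-q-1).choose (a+b-q-1)
          = (n-r-q-1).choose (a+b-q-2) + (n-r-q-1).choose (a+b-q-1) := by
        have := pascal_helper (show n+1-r-q-1 = (n-r-q-1)+1 by omega) (show 1 ≤ a+b-q-1 by omega)
        rwa [show a+b-q-1-1 = a+b-q-2 by omega] at this
      have e1 : (a-1)+b-q-1 = a+b-q-2 := by omega
      have e3 : a+(b-1)-q-1 = a+b-q-2 := by omega
      rw [hpas, e1, e3, eh_pascal a b q ha hb (by omega)]
      push_cast
      ring
    rw [Finset.sum_congr rfl hstep, Finset.sum_add_distrib, Finset.sum_add_distrib]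
    congr 1
    · congr 1
      rw [Finset.sum_range_succ]
      have hz : eh a (b-1) b = 0 := eh_oob a b (by omega) hb (by omega)
      rw [hz]
      have hb' : b - 1 + 1 = b := by omega
      rw [hb']
      simp
    · by_cases hg3 : a + b + r ≤ n
      · rw [if_pos hg3]
      · rw [if_neg hg3]
        apply Finset.sum_eq_zero
        intro q hq
        rw [Finset.mem_range] at hq
        have : (n-r-q-1).choose (a+b-q-1) = 0 := Nat.choose_eq_zero_of_lt (by omega)
        rw [this]
        simp
  · rw [S, if_neg hg, S, if_neg (by omega), S, if_neg (by omega), S, if_neg (by omega)]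
    ring

/-- recurrence, case a ≥ 2, b = 0 -/
lemma S_rec_b0 (n a r : ℕ) (ha : 2 ≤ a) :
    S (n+1) a 0 r = S n (a-1) 0 r + S n a 0 r := by
  by_cases hg : a + 0 + r ≤ n + 1
  · have hg1 : (a-1) + 0 + r ≤ n := by omega
    rw [S, if_pos hg, S, if_pos hg1, S]
    rw [Finset.sum_range_one, Finset.sum_range_one]
    have hpas : (n+1-r-0-1).choose (a+0-0-1)
        = (n-r-0-1).choose (a+0-0-2) + (n-r-0-1).choose (a+0-0-1) := by
      have := pascal_helper (show n+1-r-0-1 = (n-r-0-1)+1 by omega) (show 1 ≤ a+0-0-1 by omega)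
      rwa [show a+0-0-1-1 = a+0-0-2 by omega] at this
    have hehp : eh a 0 0 = eh (a-1) 0 0 := by
      rw [eh, eh]
      have z1 : (a+0-0-1).choose a = 0 := Nat.choose_eq_zero_of_lt (by omega)
      have z2 : ((a-1)+0-0-1).choose (a-1) = 0 := Nat.choose_eq_zero_of_lt (by omega)
      rw [z1, z2]
      have e : (a-1)+0-0-1 = a+0-0-2 := by omega
      rw [e]
      have h1 : (a+0-0-1).choose (a-1) = (a+0-0-2).choose (a-2) + (a+0-0-2).choose (a-1) := by
        have := pascal_helper (show a+0-0-1 = (a+0-0-2)+1 by omega) (show 1 ≤ a-1 by omega)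
        rwa [show a-1-1 = a-2 by omega] at this
      rw [h1]
      have z3 : (a+0-0-2).choose (a-1) = 0 := Nat.choose_eq_zero_of_lt (by omega)
      have e2 : a-1-1 = a-2 := by omega
      rw [z3, e2]
      push_cast
      ring
    rw [hpas]
    by_cases hg3 : a + 0 + r ≤ n
    · rw [if_pos hg3, Finset.sum_range_one]
      have e1 : (a-1)+0-0-1 = a+0-0-2 := by omega
      rw [hehp, e1]
      push_cast
      ring
    · rw [if_neg hg3]
      have z : (n-r-0-1).choose (a+0-0-1) = 0 := Nat.choose_eq_zero_of_lt (by omega)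
      have e1 : (a-1)+0-0-1 = a+0-0-2 := by omega
      rw [z, hehp, e1]
      push_cast
      ring
  · rw [S, if_neg hg, S, if_neg (by omega), S, if_neg (by omega)]
    ring

end Stmt7

namespace Stmt7

/-- recurrence, diagonal case with r ≥ 1 -/
lemma S_rec_diag (n a r : ℕ) (ha : 1 ≤ a) (hr : 1 ≤ r) :
    S (n+1) a a r = S n a (a-1) r + S n a a (r-1) := by
  by_cases hg : a + a + r ≤ n + 1
  · have hg1 : a + (a-1) + r ≤ n := by omega
    have hg2 : a + a + (r-1) ≤ n := by omega
    rw [S, if_pos hg, S, if_pos hg1, S, if_pos hg2]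
    rw [show a - 1 + 1 = a by omega]
    conv_lhs => rw [Finset.sum_range_succ']
    conv_rhs => rw [Finset.sum_range_succ']
    rw [eh_diag_zero a ha]
    simp only [mul_zero, zero_mul, add_zero]
    rw [← Finset.sum_add_distrib]
    apply Finset.sum_congr rfl
    intro q hq
    rw [Finset.mem_range] at hq
    have hpas : (r+(q+1)).choose (q+1) = (r+q).choose q + (r+q).choose (q+1) := by
      have := pascal_helper (show r+(q+1) = (r+q)+1 by omega) (show 1 ≤ q+1 by omega)
      rwa [show q+1-1 = q by omega] at this
    rw [show n+1-r-(q+1)-1 = n-r-q-1 by omega,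
      show n-(r-1)-(q+1)-1 = n-r-q-1 by omega,
      show r-1+(q+1) = r+q by omega,
      show a+(a-1)-q-1 = a+a-(q+1)-1 by omega,
      ← eh_swap a q, hpas]
    push_cast
    ring
  · rw [S, if_neg hg, S, if_neg (by omega), S, if_neg (by omega)]
    ring

/-- recurrence, diagonal case with r = 0 -/
lemma S_rec_diag0 (n a : ℕ) (ha : 1 ≤ a) :
    S (n+1) a a 0 = S n a (a-1) 0 := by
  by_cases hg : a + a + 0 ≤ n + 1
  · have hg1 : a + (a-1) + 0 ≤ n := by omega
    rw [S, if_pos hg, S, if_pos hg1]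
    rw [Finset.sum_range_succ']
    rw [eh_diag_zero a ha]
    simp only [mul_zero, zero_mul, add_zero]
    have hab : a - 1 + 1 = a := by omega
    rw [hab]
    apply Finset.sum_congr rfl
    intro q hq
    rw [Finset.mem_range] at hq
    have e1 : n+1-0-(q+1)-1 = n-0-q-1 := by omega
    have e2 : a+a-(q+1)-1 = a+(a-1)-q-1 := by omega
    rw [e1, e2, eh_swap a q]
    have c1 : (0+(q+1)).choose (q+1) = 1 := by
      rw [show 0+(q+1) = q+1 by omega, Nat.choose_self]
    have c2 : (0+q).choose q = 1 := by
      rw [show 0+q = q by omega, Nat.choose_self]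
    rw [c1, c2]
  · rw [S, if_neg hg, S, if_neg (by omega)]

lemma S_10 (n r : ℕ) : S n 1 0 r = if 1 + 0 + r ≤ n then 1 else 0 := by
  rw [S]
  by_cases hg : 1 + 0 + r ≤ n
  · rw [if_pos hg, if_pos hg, Finset.sum_range_one]
    have h1 : eh 1 0 0 = 1 := by
      rw [eh]
      norm_num
    rw [h1]
    norm_num
  · rw [if_neg hg, if_neg hg]

lemma S_rec_10 (n r : ℕ) :
    S (n+1) 1 0 r = (if r = n then 1 else 0) + S n 1 0 r := by
  rw [S_10, S_10]
  by_cases h1 : r = n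
  · subst h1
    rw [if_pos (by omega), if_pos rfl, if_neg (by omega)]
    norm_num
  · by_cases h2 : 1 + 0 + r ≤ n
    · rw [if_pos (by omega), if_neg h1, if_pos h2]
      norm_num
    · rw [if_neg (by omega), if_neg h1, if_neg h2]
      norm_num

lemma S_11 (n r : ℕ) : S n 1 1 r = if 1 + 1 + r ≤ n then (r:ℝ) + 1 else 0 := by
  rw [S]
  by_cases hg : 1 + 1 + r ≤ n
  · rw [if_pos hg, if_pos hg]
    rw [Finset.sum_range_succ, Finset.sum_range_one]
    rw [eh_diag_zero 1 le_rfl]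
    have h1 : eh 1 1 1 = 1 := by
      rw [eh]
      norm_num
    rw [h1]
    have c1 : (r+1).choose 1 = r+1 := Nat.choose_one_right _
    have c2 : (n-r-1-1).choose (1+1-1-1) = 1 := by
      rw [show 1+1-1-1 = 0 by omega, Nat.choose_zero_right]
    rw [c1, c2]
    push_cast
    ring
  · rw [if_neg hg, if_neg hg]

end Stmt7

namespace Stmt7

lemma A_len_zero (a b r : ℕ) (ha : 1 ≤ a) : A 0 a b r = ∅ := by
  ext l
  simp only [A, Set.mem_setOf_eq, Set.mem_empty_iff_false, iff_false]
  rintro ⟨hlen, -, hc1, -, -⟩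
  rw [List.length_eq_zero_iff.mp hlen] at hc1
  simp at hc1
  omega

lemma ncard_A_zero (n r : ℕ) :
    ((A n 0 0 r).ncard : ℝ) = if r = n then 1 else 0 := by
  rw [A_zero]
  by_cases h : r = n
  · rw [if_pos h, if_pos h, Set.ncard_singleton]
    norm_num
  · rw [if_neg h, if_neg h, Set.ncard_empty]
    norm_num

/-- Main counting theorem: the count equals the sum formula -/
lemma ncard_eq_S : ∀ n a b r : ℕ, 1 ≤ a → b ≤ a → ((A n a b r).ncard : ℝ) = S n a b r := by
  intro n
  induction n with
  | zero =>
    intro a b r ha hba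
    rw [A_len_zero a b r ha, Set.ncard_empty, S, if_neg (by omega)]
    norm_num
  | succ n ih =>
    intro a b r ha hba
    rw [ncard_A_succ n a b r ha hba]
    push_cast
    by_cases ha2 : a = 1
    · subst ha2
      interval_cases b
      · -- a = 1, b = 0
        rw [if_pos rfl, if_neg (by omega)]
        rw [show (1:ℕ) - 1 = 0 from rfl, ncard_A_zero, ih 1 0 r le_rfl (by omega), S_rec_10]
        norm_num
      · -- a = 1, b = 1
        rw [if_neg (by omega), if_pos rfl]
        rw [show (1:ℕ) - 1 = 0 from rfl]
        have h0 : ((A n 0 1 r).ncard : ℝ) = 0 := by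
          rw [A_empty_of_lt n 0 1 r (by omega), Set.ncard_empty]
          norm_num
        rw [h0, ih 1 0 r le_rfl (by omega)]
        by_cases hr : r = 0
        · subst hr
          rw [if_pos rfl, S_rec_diag0 n 1 le_rfl]
          norm_num
        · rw [if_neg hr, ih 1 1 (r-1) le_rfl le_rfl, S_rec_diag n 1 r le_rfl (by omega)]
          norm_num
    · have ha2' : 2 ≤ a := by omega
      by_cases hb0 : b = 0
      · subst hb0
        rw [if_pos rfl, if_neg (by omega)]
        rw [ih (a-1) 0 r (by omega) (by omega), ih a 0 r (by omega) (by omega),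
          S_rec_b0 n a r ha2']
        norm_num
      · by_cases hab : a = b
        · subst hab
          rw [if_neg hb0, if_pos rfl]
          have h0 : ((A n (a-1) a r).ncard : ℝ) = 0 := by
            rw [A_empty_of_lt n (a-1) a r (by omega), Set.ncard_empty]
            norm_num
          rw [h0, ih a (a-1) r (by omega) (by omega)]
          by_cases hr : r = 0
          · subst hr
            rw [if_pos rfl, S_rec_diag0 n a (by omega)]
            norm_num
          · rw [if_neg hr, ih a a (r-1) (by omega) le_rfl, S_rec_diag n a r (by omega) (by omega)]
            ring
        · rw [if_neg hb0, if_neg hab]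
          rw [ih (a-1) b r (by omega) (by omega), ih a (b-1) r (by omega) (by omega),
            ih a b r (by omega) (by omega), S_rec_gt n a b r ha2' (by omega) (by omega)]

end Stmt7


namespace Stmt7

/-- k·C(m,k) = m·C(m-1,k-1), cast to ℝ -/
lemma rel_mul {m k : ℕ} (hk : 1 ≤ k) (hkm : k ≤ m) :
    (k:ℝ) * (m.choose k : ℝ) = (m:ℝ) * ((m-1).choose (k-1) : ℝ) := by
  have h := Nat.add_one_mul_choose_eq (m-1) (k-1)
  rw [show m-1+1 = m by omega,
    show k-1+1 = k by omega] at h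
  have h2 := congrArg (Nat.cast : ℕ → ℝ) h
  push_cast at h2
  linear_combination h2.symm

/-- (m-k)·C(m,k) = m·C(m-1,k) in ℝ, valid for all k when m ≥ 1 -/
lemma rel_sub {m k : ℕ} (hm : 1 ≤ m) :
    ((m:ℝ) - (k:ℝ)) * (m.choose k : ℝ) = (m:ℝ) * ((m-1).choose k : ℝ) := by
  by_cases hkm : k ≤ m
  · by_cases hk : k = m
    · rw [hk]
      have z : (m-1).choose m = 0 := Nat.choose_eq_zero_of_lt (by omega)
      rw [z]
      norm_num
    · have h1 := Nat.choose_succ_right_eq m k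
      have h2 := Nat.add_one_mul_choose_eq (m-1) k
      rw [show m-1+1 = m by omega] at h2
      have h3 : m.choose k * (m - k) = m * (m-1).choose k := h1.symm.trans h2.symm
      have h4 := congrArg (Nat.cast : ℕ → ℝ) h3
      push_cast [Nat.cast_sub hkm] at h4
      linear_combination h4
  · have z1 : m.choose k = 0 := Nat.choose_eq_zero_of_lt (by omega)
    have z2 : (m-1).choose k = 0 := Nat.choose_eq_zero_of_lt (by omega)
    rw [z1, z2]
    norm_num

set_option maxHeartbeats 1000000 in
/-- certificate identity for the r-recursion of B -/
lemma cert2 (u r q : ℕ) (hu : 2 ≤ u) (hr : 1 ≤ r) (hq : q ≤ u) :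
    (r:ℝ)*((u:ℝ)+r+1) * (eh u u q * ((r+q).choose q : ℝ))
      - ((r:ℝ)+1)*(2*(u:ℝ)+r) * (eh u u q * ((r-1+q).choose q : ℝ))
    = ((q:ℝ)+1-1)*((q:ℝ)+1-2*u) * (eh u u (q+1) * ((r-1+(q+1)).choose (q+1) : ℝ))
      - ((q:ℝ)-1)*((q:ℝ)-2*u) * (eh u u q * ((r-1+q).choose q : ℝ)) := by
  rcases Nat.eq_zero_or_pos q with hq0 | hq1
  · subst hq0
    rw [eh_diag_zero u (by omega)]
    norm_num
  have harg2 : u+u-(q+1)-1 = (u+u-q-1)-1 := by omega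
  have harg3 : r-1+q = r+q-1 := by omega
  have harg4 : r-1+(q+1) = r+q := by omega
  rw [eh, eh, harg2, harg3, harg4]
  set M := u+u-q-1 with hM
  have hMcastR : (M:ℝ) = 2*(u:ℝ)-(q:ℝ)-1 := by
    rw [hM, Nat.cast_sub (show 1 ≤ u+u-q by omega), Nat.cast_sub (show q ≤ u+u by omega)]
    push_cast
    ring
  have hM1 : 1 ≤ M := by omega
  have hMne : (M:ℝ) ≠ 0 := by
    have : (1:ℝ) ≤ (M:ℝ) := by exact_mod_cast hM1
    linarith
  have hune : (u:ℝ) ≠ 0 := by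
    have : (2:ℝ) ≤ (u:ℝ) := by exact_mod_cast hu
    linarith
  have hrne : (r:ℝ) ≠ 0 := by
    have : (1:ℝ) ≤ (r:ℝ) := by exact_mod_cast hr
    linarith
  have hq1ne : (q:ℝ)+1 ≠ 0 := by positivity
  have hqu : (q:ℝ) ≤ (u:ℝ) := by exact_mod_cast hq
  -- relations
  have f1 : (u:ℝ) * ((M).choose u : ℝ) = ((u:ℝ)-q) * ((M).choose (u-1) : ℝ) := by
    have h := Nat.choose_succ_right_eq M (u-1)
    rw [show u-1+1 = u by omega, show M - (u-1) = u - q by omega] at h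
    have h2 := congrArg (Nat.cast : ℕ → ℝ) h
    push_cast [Nat.cast_sub hq] at h2
    linear_combination h2
  have f2 : (M:ℝ) * ((M-1).choose (u-1) : ℝ) = ((u:ℝ)-q) * ((M).choose (u-1) : ℝ) := by
    have h := rel_sub (m := M) (k := u-1) hM1
    rw [Nat.cast_sub (show 1 ≤ u by omega)] at h
    rw [show ((M:ℝ) - ((u:ℝ) - (1:ℕ))) = (u:ℝ)-q by rw [hMcastR]; push_cast; ring] at h
    exact h.symm
  have f3 : (M:ℝ) * ((M-1).choose u : ℝ) = ((u:ℝ)-q-1) * ((M).choose u : ℝ) := by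
    have h := rel_sub (m := M) (k := u) hM1
    rw [show ((M:ℝ) - (u:ℝ)) = (u:ℝ)-q-1 by rw [hMcastR]; ring] at h
    exact h.symm
  have f4 : (r:ℝ) * ((r+q).choose q : ℝ) = ((r:ℝ)+q) * ((r+q-1).choose q : ℝ) := by
    have h := rel_sub (m := r+q) (k := q) (by omega)
    push_cast at h
    rw [show ((r:ℝ)+q-q) = (r:ℝ) by ring] at h
    linear_combination h
  have f5 : ((q:ℝ)+1) * ((r+q).choose (q+1) : ℝ) = ((r:ℝ)+q) * ((r+q-1).choose q : ℝ) := by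
    have h := rel_mul (m := r+q) (k := q+1) (by omega) (by omega)
    rw [show q+1-1 = q by omega] at h
    push_cast at h
    linear_combination h
  -- substitutions
  have eA2 : ((M).choose u : ℝ) = ((u:ℝ)-q)/u * ((M).choose (u-1) : ℝ) := by
    rw [div_mul_eq_mul_div, eq_div_iff hune]
    linear_combination f1
  have eA1' : ((M-1).choose (u-1) : ℝ) = ((u:ℝ)-q)/M * ((M).choose (u-1) : ℝ) := by
    rw [div_mul_eq_mul_div, eq_div_iff hMne]
    linear_combination f2
  have eA2' : ((M-1).choose u : ℝ) = ((u:ℝ)-q-1)/M * ((M).choose u : ℝ) := by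
    rw [div_mul_eq_mul_div, eq_div_iff hMne]
    linear_combination f3
  have eB : ((r+q).choose q : ℝ) = ((r:ℝ)+q)/r * ((r+q-1).choose q : ℝ) := by
    rw [div_mul_eq_mul_div, eq_div_iff hrne]
    linear_combination f4
  have eB1 : ((r+q).choose (q+1) : ℝ) = ((r:ℝ)+q)/((q:ℝ)+1) * ((r+q-1).choose q : ℝ) := by
    rw [div_mul_eq_mul_div, eq_div_iff hq1ne]
    linear_combination f5
  rw [eB, eB1, eA1', eA2', eA2, hMcastR]
  have hMR : 2*(u:ℝ)-(q:ℝ)-1 ≠ 0 := by rw [← hMcastR]; exact hMne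
  have hMR' : (u:ℝ)*2-(q:ℝ)-1 ≠ 0 := by rw [mul_comm]; exact hMR
  field_simp
  ring
end Stmt7

namespace Stmt7

lemma eh_oob2 (u : ℕ) (hu : 2 ≤ u) : eh u u (u+1) = 0 := by
  rw [eh]
  have z1 : (u+u-(u+1)-1).choose (u-1) = 0 := Nat.choose_eq_zero_of_lt (by omega)
  have z2 : (u+u-(u+1)-1).choose u = 0 := Nat.choose_eq_zero_of_lt (by omega)
  rw [z1, z2]; ring

set_option maxHeartbeats 1000000 in
/-- certificate identity for the n-recursion of S -/
lemma cert1 (u r q n : ℕ) (hu : 2 ≤ u) (hq : q ≤ u) (hn : 2*u+r ≤ n) :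
    ((n:ℝ)+2-u)*((n:ℝ)-r-2*u+1) * (eh u u q * ((r+q).choose q : ℝ) * ((n+1-r-q-1).choose (u+u-q-1) : ℝ))
      - ((n:ℝ)+1)*((n:ℝ)-r-u) * (eh u u q * ((r+q).choose q : ℝ) * ((n-r-q-1).choose (u+u-q-1) : ℝ))
    = ((q:ℝ)+1-1)*((n:ℝ)-r-(q+1)) * (eh u u (q+1) * ((r+(q+1)).choose (q+1) : ℝ) * ((n-r-(q+1)-1).choose (u+u-(q+1)-1) : ℝ))
      - ((q:ℝ)-1)*((n:ℝ)-r-q) * (eh u u q * ((r+q).choose q : ℝ) * ((n-r-q-1).choose (u+u-q-1) : ℝ)) := by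
  rcases Nat.eq_zero_or_pos q with hq0 | hq1
  · subst hq0
    rw [eh_diag_zero u (by omega)]
    norm_num
  have harg1 : n+1-r-q-1 = (n-r-q-1)+1 := by omega
  have harg2 : u+u-(q+1)-1 = (u+u-q-1)-1 := by omega
  have harg3 : n-r-(q+1)-1 = (n-r-q-1)-1 := by omega
  rw [eh, eh, harg1, harg2, harg3]
  set M := u+u-q-1 with hM
  set P := n-r-q-1 with hP
  have hMcastR : (M:ℝ) = 2*(u:ℝ)-(q:ℝ)-1 := by
    rw [hM, Nat.cast_sub (show 1 ≤ u+u-q by omega), Nat.cast_sub (show q ≤ u+u by omega)]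
    push_cast; ring
  have hPcastR : (P:ℝ) = (n:ℝ)-(r:ℝ)-(q:ℝ)-1 := by
    rw [hP, Nat.cast_sub (show 1 ≤ n-r-q by omega), Nat.cast_sub (show q ≤ n-r by omega),
      Nat.cast_sub (show r ≤ n by omega)]
    push_cast
    ring
  have hM1 : 1 ≤ M := by omega
  have hP1 : 1 ≤ P := by omega
  have hMP : M ≤ P := by omega
  have hMne : (M:ℝ) ≠ 0 := by
    have : (1:ℝ) ≤ (M:ℝ) := by exact_mod_cast hM1
    linarith
  have hPne : (P:ℝ) ≠ 0 := by
    have : (1:ℝ) ≤ (P:ℝ) := by exact_mod_cast hP1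
    linarith
  have hune : (u:ℝ) ≠ 0 := by
    have : (2:ℝ) ≤ (u:ℝ) := by exact_mod_cast hu
    linarith
  have hq1ne : (q:ℝ)+1 ≠ 0 := by positivity
  have hPM : (P:ℝ)+1-M ≠ 0 := by
    have h1 : M ≤ P := hMP
    have : (M:ℝ) ≤ (P:ℝ) := by exact_mod_cast h1
    linarith
  -- relations
  have f1 : (u:ℝ) * ((M).choose u : ℝ) = ((u:ℝ)-q) * ((M).choose (u-1) : ℝ) := by
    have h := Nat.choose_succ_right_eq M (u-1)
    rw [show u-1+1 = u by omega, show M - (u-1) = u - q by omega] at h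
    have h2 := congrArg (Nat.cast : ℕ → ℝ) h
    push_cast [Nat.cast_sub hq] at h2
    linear_combination h2
  have f2 : (M:ℝ) * ((M-1).choose (u-1) : ℝ) = ((u:ℝ)-q) * ((M).choose (u-1) : ℝ) := by
    have h := rel_sub (m := M) (k := u-1) hM1
    rw [Nat.cast_sub (show 1 ≤ u by omega)] at h
    rw [show ((M:ℝ) - ((u:ℝ) - (1:ℕ))) = (u:ℝ)-q by rw [hMcastR]; push_cast; ring] at h
    exact h.symm
  have f3 : (M:ℝ) * ((M-1).choose u : ℝ) = ((u:ℝ)-q-1) * ((M).choose u : ℝ) := by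
    have h := rel_sub (m := M) (k := u) hM1
    rw [show ((M:ℝ) - (u:ℝ)) = (u:ℝ)-q-1 by rw [hMcastR]; ring] at h
    exact h.symm
  have fB1 : ((q:ℝ)+1) * ((r+(q+1)).choose (q+1) : ℝ) = ((r:ℝ)+q+1) * ((r+q).choose q : ℝ) := by
    have h := rel_mul (m := r+q+1) (k := q+1) (by omega) (by omega)
    rw [show r+q+1-1 = r+q by omega, show q+1-1 = q by omega] at h
    push_cast at h
    rw [show r+(q+1) = r+q+1 by omega]
    linear_combination h
  have fD0' : ((P:ℝ)+1-M) * ((P+1).choose M : ℝ) = ((P:ℝ)+1) * ((P).choose M : ℝ) := by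
    have h := rel_sub (m := P+1) (k := M) (by omega)
    rw [show (P+1)-1 = P by omega] at h
    push_cast at h
    linear_combination h
  have fD1 : (M:ℝ) * ((P).choose M : ℝ) = (P:ℝ) * ((P-1).choose (M-1) : ℝ) := by
    exact rel_mul (m := P) (k := M) hM1 hMP
  -- nonzero scalar facts
  have hMR : 2*(u:ℝ)-(q:ℝ)-1 ≠ 0 := by rw [← hMcastR]; exact hMne
  have hPR : (n:ℝ)-(r:ℝ)-(q:ℝ)-1 ≠ 0 := by rw [← hPcastR]; exact hPne
  have hNMR : (n:ℝ)-(r:ℝ)-2*(u:ℝ)+1 ≠ 0 := by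
    have e : (n:ℝ)-(r:ℝ)-2*(u:ℝ)+1 = ((P:ℝ)+1-M) := by rw [hPcastR, hMcastR]; ring
    rw [e]; exact hPM
  -- substitutions with explicit scalar coefficients
  have eA2 : ((M).choose u : ℝ) = ((u:ℝ)-q)/u * ((M).choose (u-1) : ℝ) := by
    rw [div_mul_eq_mul_div, eq_div_iff hune]
    linear_combination f1
  have eA1' : ((M-1).choose (u-1) : ℝ) = ((u:ℝ)-q)/(2*(u:ℝ)-(q:ℝ)-1) * ((M).choose (u-1) : ℝ) := by
    rw [div_mul_eq_mul_div, eq_div_iff hMR]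
    linear_combination f2 - (Nat.choose (M-1) (u-1) : ℝ) * hMcastR
  have eA2' : ((M-1).choose u : ℝ) = ((u:ℝ)-q-1)/(2*(u:ℝ)-(q:ℝ)-1) * ((M).choose u : ℝ) := by
    rw [div_mul_eq_mul_div, eq_div_iff hMR]
    linear_combination f3 - (Nat.choose (M-1) u : ℝ) * hMcastR
  have eB1 : ((r+(q+1)).choose (q+1) : ℝ) = ((r:ℝ)+q+1)/((q:ℝ)+1) * ((r+q).choose q : ℝ) := by
    rw [div_mul_eq_mul_div, eq_div_iff hq1ne]
    linear_combination fB1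
  have eD0' : ((P+1).choose M : ℝ)
      = ((n:ℝ)-(r:ℝ)-q)/((n:ℝ)-(r:ℝ)-2*(u:ℝ)+1) * ((P).choose M : ℝ) := by
    rw [div_mul_eq_mul_div, eq_div_iff hNMR]
    linear_combination fD0' + ((Nat.choose (P+1) M : ℝ)) * (hMcastR - hPcastR) + ((Nat.choose P M : ℝ)) * hPcastR
  have eD1 : ((P-1).choose (M-1) : ℝ)
      = (2*(u:ℝ)-(q:ℝ)-1)/((n:ℝ)-(r:ℝ)-(q:ℝ)-1) * ((P).choose M : ℝ) := by
    rw [div_mul_eq_mul_div, eq_div_iff hPR]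
    linear_combination - fD1 + ((Nat.choose P M : ℝ)) * hMcastR
      - ((Nat.choose (P-1) (M-1) : ℝ)) * hPcastR
  rw [eB1, eD0', eD1, eA1', eA2', eA2]
  field_simp
  ring

end Stmt7

namespace Stmt7

noncomputable def Bsum (u r : ℕ) : ℝ :=
  ∑ q ∈ Finset.range (u+1), eh u u q * ((r+q).choose q : ℝ)

lemma S_base (u r : ℕ) (hu : 1 ≤ u) : S (2*u+r) u u r = Bsum u r := by
  rw [S, if_pos (by omega), Bsum]
  apply Finset.sum_congr rfl
  intro q hq
  rw [Finset.mem_range] at hq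
  rw [show 2*u+r-r-q-1 = u+u-q-1 by omega, Nat.choose_self]
  norm_num

lemma hockey (k : ℕ) : ∀ m : ℕ,
    (∑ i ∈ Finset.range m, ((k+i).choose k : ℝ)) = ((k+m).choose (k+1) : ℝ) := by
  intro m
  induction m with
  | zero =>
    simp [Nat.choose_eq_zero_of_lt]
  | succ m ih =>
    rw [Finset.sum_range_succ, ih]
    have h := Nat.choose_succ_succ (k+m) k
    have h2 := congrArg (Nat.cast : ℕ → ℝ) h
    push_cast at h2
    rw [show k+(m+1) = (k+m)+1 by omega]
    push_cast
    linarith [h2]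

lemma B_r0 (u : ℕ) (hu : 1 ≤ u) :
    Bsum u 0 = ((2*u).choose u : ℝ) - ((2*u).choose (u+1) : ℝ) := by
  rw [Bsum]
  have hterm : ∀ q ∈ Finset.range (u+1),
      eh u u q * ((0+q).choose q : ℝ)
        = ((u+u-q-1).choose (u-1) : ℝ) - ((u+u-q-1).choose u : ℝ) := by
    intro q hq
    rw [show 0+q = q by omega, Nat.choose_self, eh]
    norm_num
  rw [Finset.sum_congr rfl hterm, Finset.sum_sub_distrib]
  have h1 : (∑ q ∈ Finset.range (u+1), ((u+u-q-1).choose (u-1) : ℝ))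
      = ((2*u).choose u : ℝ) := by
    rw [← Finset.sum_range_reflect]
    have : ∀ j ∈ Finset.range (u+1),
        ((u+u-(u+1-1-j)-1).choose (u-1) : ℝ) = (((u-1)+j).choose (u-1) : ℝ) := by
      intro j hj
      rw [Finset.mem_range] at hj
      congr 2
      omega
    rw [Finset.sum_congr rfl this, hockey (u-1) (u+1)]
    congr 2 <;> omega
  have h2 : (∑ q ∈ Finset.range (u+1), ((u+u-q-1).choose u : ℝ))
      = ((2*u).choose (u+1) : ℝ) := by
    rw [← Finset.sum_range_reflect]
    have e : ∀ j ∈ Finset.range (u+1),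
        ((u+u-(u+1-1-j)-1).choose u : ℝ) = (((u-1)+j).choose u : ℝ) := by
      intro j hj
      rw [Finset.mem_range] at hj
      congr 2
      omega
    rw [Finset.sum_congr rfl e, Finset.sum_range_succ']
    have z : (((u-1)+0).choose u : ℝ) = 0 := by
      rw [Nat.choose_eq_zero_of_lt (by omega)]
      norm_num
    rw [z, add_zero]
    have e2 : ∀ j ∈ Finset.range u,
        (((u-1)+(j+1)).choose u : ℝ) = ((u+j).choose u : ℝ) := by
      intro j hj
      congr 2
      omega
    rw [Finset.sum_congr rfl e2, hockey u u]
    congr 2 <;> omega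
  rw [h1, h2]

lemma cat_base (u : ℕ) (hu : 1 ≤ u) :
    ((2*u).choose u : ℝ) - ((2*u).choose (u+1) : ℝ)
      = (((2*u+1).choose u : ℝ))/(2*(u:ℝ)+1) := by
  have h1 := Nat.choose_succ_succ (2*u) u
  simp only [Nat.succ_eq_add_one] at h1
  have h1c := congrArg (Nat.cast : ℕ → ℝ) h1
  push_cast at h1c
  have hsym := Nat.choose_symm (show u+1 ≤ 2*u+1 by omega)
  rw [show 2*u+1-(u+1) = u by omega] at hsym
  have hsymc := congrArg (Nat.cast : ℕ → ℝ) hsym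
  push_cast at hsymc
  have h2 := Nat.choose_succ_right_eq (2*u) u
  rw [show 2*u-u = u by omega] at h2
  have h2c := congrArg (Nat.cast : ℕ → ℝ) h2
  push_cast at h2c
  have hne : 2*(u:ℝ)+1 ≠ 0 := by positivity
  rw [eq_div_iff hne]
  linear_combination - h1c - hsymc - 2 * h2c

lemma B_step (u r : ℕ) (hu : 2 ≤ u) (hr : 1 ≤ r) :
    (r:ℝ)*((u:ℝ)+r+1) * Bsum u r = ((r:ℝ)+1)*(2*(u:ℝ)+r) * Bsum u (r-1) := by
  set g : ℕ → ℝ := fun p => ((p:ℝ)-1)*((p:ℝ)-2*u) * (eh u u p * ((r-1+p).choose p : ℝ)) with hg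
  have key : ∀ q ∈ Finset.range (u+1),
      (r:ℝ)*((u:ℝ)+r+1) * (eh u u q * ((r+q).choose q : ℝ))
      - ((r:ℝ)+1)*(2*(u:ℝ)+r) * (eh u u q * ((r-1+q).choose q : ℝ))
      = g (q+1) - g q := by
    intro q hq
    rw [Finset.mem_range] at hq
    have h := cert2 u r q hu hr (by omega)
    rw [hg]
    push_cast
    linear_combination h
  have hsum := Finset.sum_congr rfl key
  rw [Finset.sum_sub_distrib, ← Finset.mul_sum, ← Finset.mul_sum] at hsum
  rw [Finset.sum_range_sub g (u+1)] at hsum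
  have hg0 : g 0 = 0 := by
    rw [hg]
    simp only [eh_diag_zero u (by omega)]
    norm_num
  have hgu : g (u+1) = 0 := by
    rw [hg]
    simp only [eh_oob2 u hu]
    norm_num
  rw [hg0, hgu] at hsum
  rw [Bsum, Bsum]
  linarith [hsum]

end Stmt7

namespace Stmt7

lemma B_val (u : ℕ) (hu : 2 ≤ u) : ∀ r : ℕ,
    Bsum u r = ((r:ℝ)+1) * ((2*u+r+1).choose u : ℝ) / (2*(u:ℝ)+r+1) := by
  intro r
  induction r with
  | zero =>
    rw [B_r0 u (by omega), cat_base u (by omega)]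
    rw [show 2*u+0+1 = 2*u+1 by omega]
    push_cast
    ring
  | succ r ih =>
    have hstep := B_step u (r+1) hu (by omega)
    rw [show r+1-1 = r by omega] at hstep
    push_cast at hstep
    have h3 := rel_sub (m := 2*u+r+2) (k := u) (by omega)
    rw [show 2*u+r+2-1 = 2*u+r+1 by omega] at h3
    push_cast at h3
    have d3 : (2*(u:ℝ)+r+1) ≠ 0 := by positivity
    have ihm : Bsum u r * (2*(u:ℝ)+(r:ℝ)+1) = ((r:ℝ)+1) * ((2*u+r+1).choose u : ℝ) := by
      rw [ih]
      field_simp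
    rw [show 2*u+(r+1)+1 = 2*u+r+2 by omega]
    push_cast
    rw [eq_div_iff (show 2*(u:ℝ)+((r:ℝ)+1)+1 ≠ 0 by positivity)]
    have hK : ((r:ℝ)+1)*((u:ℝ)+(r:ℝ)+2)*(2*(u:ℝ)+(r:ℝ)+1) ≠ 0 := by positivity
    have key : (Bsum u (r+1) * (2*(u:ℝ)+((r:ℝ)+1)+1)) * (((r:ℝ)+1)*((u:ℝ)+(r:ℝ)+2)*(2*(u:ℝ)+(r:ℝ)+1))
        = ((((r:ℝ)+1)+1) * ((2*u+r+2).choose u : ℝ)) * (((r:ℝ)+1)*((u:ℝ)+(r:ℝ)+2)*(2*(u:ℝ)+(r:ℝ)+1)) := by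
      linear_combination (2*(u:ℝ)+(r:ℝ)+2)*(2*(u:ℝ)+(r:ℝ)+1) * hstep
        + ((r:ℝ)+2)*(2*(u:ℝ)+(r:ℝ)+1)*(2*(u:ℝ)+(r:ℝ)+2) * ihm
        - ((r:ℝ)+2)*((r:ℝ)+1)*(2*(u:ℝ)+(r:ℝ)+1) * h3
    have := mul_right_cancel₀ hK key
    linarith [this]

end Stmt7

namespace Stmt7

lemma S_step (u r n : ℕ) (hu : 2 ≤ u) (hn : 2*u+r ≤ n) :
    ((n:ℝ)+2-u)*((n:ℝ)-r-2*u+1) * S (n+1) u u r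
      = ((n:ℝ)+1)*((n:ℝ)-r-u) * S n u u r := by
  set g : ℕ → ℝ := fun p => ((p:ℝ)-1)*((n:ℝ)-r-p)
      * (eh u u p * ((r+p).choose p : ℝ) * ((n-r-p-1).choose (u+u-p-1) : ℝ)) with hg
  have key : ∀ q ∈ Finset.range (u+1),
      ((n:ℝ)+2-u)*((n:ℝ)-r-2*u+1) * (eh u u q * ((r+q).choose q : ℝ) * ((n+1-r-q-1).choose (u+u-q-1) : ℝ))
      - ((n:ℝ)+1)*((n:ℝ)-r-u) * (eh u u q * ((r+q).choose q : ℝ) * ((n-r-q-1).choose (u+u-q-1) : ℝ))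
      = g (q+1) - g q := by
    intro q hq
    rw [Finset.mem_range] at hq
    have h := cert1 u r q n hu (by omega) hn
    rw [hg]
    push_cast
    linear_combination h
  have hsum := Finset.sum_congr rfl key
  rw [Finset.sum_sub_distrib, ← Finset.mul_sum, ← Finset.mul_sum] at hsum
  rw [Finset.sum_range_sub g (u+1)] at hsum
  have hg0 : g 0 = 0 := by
    rw [hg]
    simp only [eh_diag_zero u (by omega)]
    norm_num
  have hgu : g (u+1) = 0 := by
    rw [hg]
    simp only [eh_oob2 u hu]
    norm_num
  rw [hg0, hgu] at hsum
  rw [S, if_pos (by omega), S, if_pos (by omega)]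
  linarith [hsum]

noncomputable def Tg (n u r : ℕ) : ℝ :=
  ((r:ℝ)+1)/((n:ℝ)+1) * ((n+1).choose u : ℝ) * ((n-r-u-1).choose (u-1) : ℝ)

lemma Tg_step (u r n : ℕ) (hu : 2 ≤ u) (hn : 2*u+r ≤ n) :
    ((n:ℝ)+2-u)*((n:ℝ)-r-2*u+1) * Tg (n+1) u r
      = ((n:ℝ)+1)*((n:ℝ)-r-u) * Tg n u r := by
  rw [Tg, Tg]
  have hA := rel_sub (m := n+2) (k := u) (by omega)
  rw [show n+2-1 = n+1 by omega] at hA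
  push_cast at hA
  have hB := rel_sub (m := n-r-u) (k := u-1) (by omega)
  rw [show n-r-u-1 = n-r-u-1 from rfl] at hB
  have hBc : ((n:ℝ)-r-2*u+1) * ((n-r-u).choose (u-1) : ℝ)
      = ((n:ℝ)-r-u) * ((n-r-u-1).choose (u-1) : ℝ) := by
    have e1 : ((n-r-u : ℕ):ℝ) = (n:ℝ)-r-u := by
      rw [Nat.cast_sub (show u ≤ n-r by omega), Nat.cast_sub (show r ≤ n by omega)]
    have e2 : ((u-1 : ℕ):ℝ) = (u:ℝ)-1 := by
      rw [Nat.cast_sub (show 1 ≤ u by omega)]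
      norm_num
    rw [e1, e2] at hB
    rw [show ((n:ℝ)-r-u) - ((u:ℝ)-1) = (n:ℝ)-r-2*u+1 by ring] at hB
    exact hB
  have harg : n+1-r-u-1 = n-r-u := by omega
  rw [harg]
  have hn1 : ((n:ℝ)+1) ≠ 0 := by positivity
  have hn2 : ((n:ℝ)+2) ≠ 0 := by positivity
  have hcast1 : (2*(u:ℝ)+(r:ℝ) ≤ (n:ℝ)) := by exact_mod_cast hn
  have hd1 : ((n:ℝ)+2-u) ≠ 0 := by
    have : (0:ℝ) ≤ r := by positivity
    have h2 : (0:ℝ) ≤ u := by positivity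
    nlinarith
  have hd2 : ((n:ℝ)-r-2*u+1) ≠ 0 := by
    have : (0:ℝ) ≤ r := by positivity
    nlinarith
  have eC : ((n+2).choose u : ℝ) = ((n:ℝ)+2)/((n:ℝ)+2-u) * ((n+1).choose u : ℝ) := by
    rw [div_mul_eq_mul_div, eq_div_iff hd1]
    linear_combination hA
  have eD : ((n-r-u).choose (u-1) : ℝ)
      = ((n:ℝ)-r-u)/((n:ℝ)-r-2*u+1) * ((n-r-u-1).choose (u-1) : ℝ) := by
    rw [div_mul_eq_mul_div, eq_div_iff hd2]
    linear_combination hBc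
  rw [show n+1+1 = n+2 by omega, eC, eD]
  push_cast
  field_simp
  ring

end Stmt7

namespace Stmt7

lemma CF (u r : ℕ) (hu : 2 ≤ u) : ∀ n, 2*u+r ≤ n → S n u u r = Tg n u r := by
  intro n hn
  induction n, hn using Nat.le_induction with
  | base =>
    rw [S_base u r (by omega), B_val u hu r, Tg]
    rw [show 2*u+r-r-u-1 = u-1 by omega, Nat.choose_self]
    push_cast
    ring
  | succ n hn ih =>
    have h1 := S_step u r n hu hn
    have h2 := Tg_step u r n hu hn
    rw [ih] at h1
    have hcast1 : (2*(u:ℝ)+(r:ℝ) ≤ (n:ℝ)) := by exact_mod_cast hn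
    have hα : ((n:ℝ)+2-u)*((n:ℝ)-r-2*u+1) ≠ 0 := by
      have hr0 : (0:ℝ) ≤ r := by positivity
      have hu0 : (0:ℝ) ≤ u := by positivity
      have e1 : ((n:ℝ)+2-u) > 0 := by nlinarith
      have e2 : ((n:ℝ)-r-2*u+1) > 0 := by nlinarith
      positivity
    exact mul_left_cancel₀ hα (h1.trans h2.symm)

lemma CF1 (r n : ℕ) (hn : 2*1+r ≤ n) : S n 1 1 r = Tg n 1 r := by
  rw [S_11, if_pos (by omega), Tg]
  rw [Nat.choose_one_right, show 1-1 = 0 from rfl, Nat.choose_zero_right]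
  have hne : ((n:ℝ)+1) ≠ 0 := by positivity
  push_cast
  field_simp

lemma set_eq (n u r0 : ℕ) :
    {l : List ℤ | l.length = n ∧ IsMotzkinPath l ∧ l.count 1 = u ∧ hZeroSteps l = r0}
      = A n u u r0 := by
  ext l
  simp only [Set.mem_setOf_eq, A, IsMotzkinPath]
  constructor
  · rintro ⟨hlen, ⟨hmem, hpre, hsum⟩, hc1, hr⟩
    have hcm : l.count (-1) = u := by
      have h := sum_eq_counts l hmem
      rw [hsum, hc1] at h
      have h2 : (u:ℤ) = l.count (-1) := by linarith
      exact_mod_cast h2.symm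
    exact ⟨hlen, ⟨hmem, hpre⟩, hc1, hcm, hr⟩
  · rintro ⟨hlen, ⟨hmem, hpre⟩, hc1, hcm, hr⟩
    refine ⟨hlen, ⟨hmem, hpre, ?_⟩, hc1, hr⟩
    rw [sum_eq_counts l hmem, hc1, hcm]
    ring

end Stmt7


theorem stmt7 (n u r0 : ℕ) (hn : 1 ≤ n) (hu : 1 ≤ u) (h : 2 * u + r0 ≤ n) :
    (({l : List ℤ | l.length = n ∧ IsMotzkinPath l ∧ l.count 1 = u ∧
        hZeroSteps l = r0}.ncard : ℝ))
      = (((r0 : ℝ) + 1) / ((n : ℝ) + 1)) * (Nat.choose (n + 1) u : ℝ) *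
          (Nat.choose (n - r0 - u - 1) (u - 1) : ℝ) := by
  rw [Stmt7.set_eq n u r0, Stmt7.ncard_eq_S n u u r0 hu le_rfl]
  have hTg : Stmt7.S n u u r0 = Stmt7.Tg n u r0 := by
    rcases Nat.lt_or_ge u 2 with h2 | h2
    · have hu1 : u = 1 := by omega
      subst hu1
      exact Stmt7.CF1 r0 n (by omega)
    · exact Stmt7.CF u r0 h2 n h
  rw [hTg, Stmt7.Tg]
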